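/- Let F be a field, n ≥ 1, and let N₁, N₂ be n×n matrices over F with N₁² = 0 and N₂² = 0. Then in F[X]: det((X²+1)•I − X•N₁ − X•N₂) = det((X²+1)•I − X²•N₁ − N₂). -/

import Mathlib

open Polynomial Matrix

/-- Over a domain, a square-zero matrix has `det (1 + M) = 1`. -/
lemma det_one_add_of_sq_eq_zero {R : Type*} [CommRing R] [IsDomain R]
    {m : Type*} [Fintype m] [DecidableEq m] (M : Matrix m m R) (h : M * M = 0) :
    (1 + M).det = 1 := by
  set Mc : Matrix m m R[X] := M.map (C : R → R[X]) with hMc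
  have hCmul : Mc * Mc = 0 := by
    have : Mc * Mc = (M * M).map (C : R →+* R[X]) := (Matrix.map_mul).symm
    rw [this, h]
    exact Matrix.map_zero _ (map_zero _)
  have hAA : ((X : R[X]) • Mc) * ((X : R[X]) • Mc) = 0 := by
    rw [smul_mul_assoc, mul_smul_comm, hCmul, smul_zero, smul_zero]
  have key : ((1 : Matrix m m R[X]) + (X : R[X]) • Mc) * (1 - (X : R[X]) • Mc) = 1 := by
    rw [add_mul, one_mul, mul_sub, mul_one, hAA, sub_zero]
    abel
  have hu : IsUnit ((1 : Matrix m m R[X]) + (X : R[X]) • Mc).det :=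
    IsUnit.of_mul_eq_one _ (by rw [← det_mul, key, det_one])
  obtain ⟨r, -, hrC⟩ := Polynomial.isUnit_iff.mp hu
  have heval : ∀ t : R,
      Polynomial.eval t ((1 + (X : R[X]) • Mc).det) = (1 + t • M).det := by
    intro t
    have := (Polynomial.evalRingHom t).map_det (1 + (X : R[X]) • Mc)
    rw [coe_evalRingHom] at this
    rw [this]
    congr 1
    ext i j
    by_cases hij : i = j <;>
      simp [hMc, RingHom.mapMatrix_apply, Matrix.map_apply, Matrix.add_apply,
        Matrix.smul_apply, Matrix.one_apply, hij, smul_eq_mul] <;> ring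
  have e0 := heval 0
  have e1 := heval 1
  rw [← hrC] at e0 e1
  simp only [Polynomial.eval_C, zero_smul, add_zero, det_one, one_smul] at e0 e1
  rw [← e1, e0]

/-- Over a field, `det (c • 1 + d • M) = c ^ n` for square-zero `M` and `c ≠ 0`. -/
lemma det_smul_one_add_smul_field {K : Type*} [Field K]
    {m : Type*} [Fintype m] [DecidableEq m] (M : Matrix m m K) (h : M * M = 0)
    {c : K} (hc : c ≠ 0) (d : K) :
    (c • (1 : Matrix m m K) + d • M).det = c ^ Fintype.card m := by
  have h' : ((d / c) • M) * ((d / c) • M) = 0 := by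
    rw [smul_mul_assoc, mul_smul_comm, h, smul_zero, smul_zero]
  have hcd : c * (d / c) = d := by field_simp
  have hrw : c • (1 : Matrix m m K) + d • M = c • (1 + (d / c) • M) := by
    rw [smul_add, smul_smul, hcd]
  rw [hrw, det_smul, det_one_add_of_sq_eq_zero _ h', mul_one]

/-- Over a domain, `det (c • 1 + d • M) = c ^ n` for square-zero `M` and `c ≠ 0`. -/
lemma det_smul_one_add_smul {R : Type*} [CommRing R] [IsDomain R]
    {m : Type*} [Fintype m] [DecidableEq m] (M : Matrix m m R) (h : M * M = 0)
    {c : R} (hc : c ≠ 0) (d : R) :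
    (c • (1 : Matrix m m R) + d • M).det = c ^ Fintype.card m := by
  let K := FractionRing R
  have hg : Function.Injective (algebraMap R K) := IsFractionRing.injective R K
  apply hg
  have hmap : (algebraMap R K) ((c • (1 : Matrix m m R) + d • M).det)
      = ((algebraMap R K) c • (1 : Matrix m m K)
          + (algebraMap R K) d • M.map (algebraMap R K)).det := by
    rw [RingHom.map_det]
    congr 1
    ext i j
    by_cases hij : i = j <;>
      simp [Matrix.map_apply, Matrix.add_apply, Matrix.smul_apply, Matrix.one_apply, hij,
        smul_eq_mul] <;> simp [Algebra.smul_def]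
  have hM' : M.map (algebraMap R K) * M.map (algebraMap R K) = 0 := by
    rw [← Matrix.map_mul, h]
    exact Matrix.map_zero _ (map_zero _)
  have hc' : (algebraMap R K) c ≠ 0 := fun hz => hc (hg (by rw [hz, map_zero]))
  rw [hmap, det_smul_one_add_smul_field _ hM' hc', map_pow]

/-- Proposition 3.7 of the paper: if `N₁² = N₂² = 0`, then
`det((X²+1)I - X N₁ - X N₂) = det((X²+1)I - X² N₁ - N₂)` in `F[X]`. -/
theorem det_square_nilpotent_identity (F : Type*) [Field F] (n : ℕ) (hn : 1 ≤ n)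
    (N₁ N₂ : Matrix (Fin n) (Fin n) F) (h1 : N₁ * N₁ = 0) (h2 : N₂ * N₂ = 0) :
    (((X : F[X]) ^ 2 + 1) • (1 : Matrix (Fin n) (Fin n) F[X]) -
        (X : F[X]) • N₁.map Polynomial.C - (X : F[X]) • N₂.map Polynomial.C).det =
      (((X : F[X]) ^ 2 + 1) • (1 : Matrix (Fin n) (Fin n) F[X]) -
        ((X : F[X]) ^ 2) • N₁.map Polynomial.C - N₂.map Polynomial.C).det := by
  set x : F[X] := X with hx
  set c : F[X] := x ^ 2 + 1 with hcdef
  set M₁ : Matrix (Fin n) (Fin n) F[X] := N₁.map Polynomial.C with hM₁def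
  set M₂ : Matrix (Fin n) (Fin n) F[X] := N₂.map Polynomial.C with hM₂def
  have hM1 : M₁ * M₁ = 0 := by
    rw [hM₁def, ← Matrix.map_mul (f := (Polynomial.C : F →+* F[X])), h1]
    exact Matrix.map_zero _ (map_zero _)
  have hM2 : M₂ * M₂ = 0 := by
    rw [hM₂def, ← Matrix.map_mul (f := (Polynomial.C : F →+* F[X])), h2]
    exact Matrix.map_zero _ (map_zero _)
  have hc : c ≠ 0 := by
    intro hz
    have := congrArg (Polynomial.eval 0) hz
    simp [hcdef, hx] at this
  have key : (c • (1 : Matrix (Fin n) (Fin n) F[X]) + (x - 1) • M₂) *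
      ((c • 1 - x • M₁ - x • M₂) * (c • 1 + (x - x ^ 2) • M₁)) =
      (c ^ 2) • (c • 1 - x ^ 2 • M₁ - M₂) := by
    simp only [mul_add, add_mul, mul_sub, sub_mul, smul_mul_assoc, mul_smul_comm,
      smul_smul, mul_one, one_mul, ← mul_assoc, hM1, hM2, smul_zero, zero_mul, mul_zero,
      smul_add, smul_sub, zero_smul, sub_zero, add_zero]
    module
  have hdet := congrArg Matrix.det key
  rw [det_mul, det_mul, det_smul,
    det_smul_one_add_smul _ hM2 hc (x - 1),
    det_smul_one_add_smul _ hM1 hc (x - x ^ 2)] at hdet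
  have hcard : Fintype.card (Fin n) = n := Fintype.card_fin n
  rw [hcard] at hdet
  rw [← pow_mul, mul_comm 2 n, pow_mul] at hdet
  obtain ⟨cn, hcn⟩ : ∃ y, c ^ n = y := ⟨_, rfl⟩
  rw [hcn] at hdet
  have hpow : cn ≠ 0 := hcn ▸ pow_ne_zero _ hc
  have h2n : cn * (cn * (c • (1 : Matrix (Fin n) (Fin n) F[X]) - x • M₁ - x • M₂).det)
      = cn * (cn * (c • (1 : Matrix (Fin n) (Fin n) F[X]) - x ^ 2 • M₁ - M₂).det) := by
    linear_combination hdet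
  exact mul_left_cancel₀ hpow (mul_left_cancel₀ hpow h2n)
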